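/- The Riemannian Lie group corresponding to the Lie algebra g₁ (with [X,Y]=Y, [X,W]=W and orthonormal basis {X,Y,Z,W}) has constant scalar curvature −6. -/

import Mathlib

open Real

abbrev V4 := Fin 4 → ℝ

/-- the inner product making the basis orthonormal -/
def ip (u v : V4) : ℝ := u 0 * v 0 + u 1 * v 1 + u 2 * v 2 + u 3 * v 3

def X : V4 := ![1, 0, 0, 0]
def Y : V4 := ![0, 1, 0, 0]
def Z : V4 := ![0, 0, 1, 0]
def W : V4 := ![0, 0, 0, 1]

def e : Fin 4 → V4 := ![X, Y, Z, W]

def br (u v : V4) : V4 := (u 0 * v 1 - u 1 * v 0) • Y + (u 0 * v 3 - u 3 * v 0) • W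

set_option maxHeartbeats 1000000 in
theorem stmt2 (nabla : V4 → V4 → V4)
    (hK : ∀ u v w : V4, 2 * ip (nabla u v) w = ip (br u v) w - ip (br v w) u + ip (br w u) v)
    (R : V4 → V4 → V4 → V4)
    (hR : ∀ u v w : V4, R u v w = nabla u (nabla v w) - nabla v (nabla u w) - nabla (br u v) w) :
    (∑ j : Fin 4, ∑ k : Fin 4, if j ≠ k then ip (R (e k) (e j) (e j)) (e k) / (ip (e j) (e j) * ip (e k) (e k) - ip (e j) (e k) ^ 2) else 0) = -6 := by
  have hval : ∀ u v : V4, nabla u v = ![u 1 * v 1 + u 3 * v 3, -(u 1 * v 0), 0, -(u 3 * v 0)] := by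
    intro u v
    funext i
    fin_cases i
    · have := hK u v X; simp [ip, br, X, Y, W] at this ⊢; linarith
    · have := hK u v Y; simp [ip, br, X, Y, W] at this ⊢; linarith
    · have := hK u v Z; simp [ip, br, X, Y, Z, W] at this ⊢; linarith
    · have := hK u v W; simp [ip, br, X, Y, W] at this ⊢; linarith
  simp only [Fin.sum_univ_four, hR, hval, e, br, ip, X, Y, Z, W]
  norm_num [Matrix.vecHead, Matrix.vecTail]
  rw [if_neg (by decide), if_neg (by decide), if_neg (by decide), if_neg (by decide)]
  simp; norm_num
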